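/- Let Φ : M_d(ℂ) → M_d(ℂ) be a quantum channel in Stinespring form given by an isometry K : ℂ^d → ℂ^d⊗ℂ^{d_E}, and let Φ⊗Φ be the corresponding product channel on M_{d²}(ℂ). Define the Holevo capacity C(Φ) as the supremum over all finite ensembles ℰ = {(p_j, ψ_j)} (weights p_j ≥ 0 with ∑p_j = 1 and unit vectors ψ_j ∈ ℂ^d) of χ(ℰ) = S(Φ(∑_j p_j |ψ_j⟩⟨ψ_j|)) − ∑_j p_j S(Φ(|ψ_j⟩⟨ψ_j|)), and similarly C(Φ⊗Φ) using unit vectors in ℂ^d⊗ℂ^d. Let ρ_Av be a density matrix on ℂ^d with Φ(ρ_Av) positive definite, and assume: (i) for every density matrix γ on ℂ^d⊗ℂ^d with (Φ⊗Φ)(γ) positive definite, C(Φ⊗Φ) ≤ sup over unit vectors Ψ ∈ ℂ^d⊗ℂ^d of H((Φ⊗Φ)(|Ψ⟩⟨Ψ|), (Φ⊗Φ)(γ)); (ii) there is a density matrix Γ_Av on ℂ^d⊗ℂ^d with (Φ⊗Φ)(Γ_Av) positive definite such that C(Φ⊗Φ) = sup over unit vectors Ψ of H((Φ⊗Φ)(|Ψ⟩⟨Ψ|),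 (Φ⊗Φ)(Γ_Av)), and such that (Φ⊗Φ)(Γ_Av) ≠ (Φ⊗Φ)(ρ_Av⊗ρ_Av) implies C(Φ⊗Φ) > 2 C(Φ). Then C(Φ⊗Φ) > 2 C(Φ) if and only if there exists a unit vector Ψ ∈ ℂ^d⊗ℂ^d with H((Φ⊗Φ)(|Ψ⟩⟨Ψ|), (Φ⊗Φ)(ρ_Av⊗ρ_Av)) > 2 C(Φ). -/

import Mathlib

open Matrix
open scoped Kronecker ComplexOrder

attribute [local instance] Matrix.frobeniusNormedAddCommGroup Matrix.frobeniusNormedSpace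

/-- The von Neumann entropy `S(A) = −∑ᵢ λᵢ log λᵢ` of a Hermitian matrix `A`
(with the convention `0 · log 0 = 0`; junk value `0` for non-Hermitian input). -/
noncomputable def entropy {n : Type*} [Fintype n] [DecidableEq n] (A : Matrix n n ℂ) : ℝ :=
  if h : A.IsHermitian then -∑ i, h.eigenvalues i * Real.log (h.eigenvalues i) else 0

/-- The matrix logarithm of a Hermitian matrix: the Hermitian matrix with the same
eigenvectors and eigenvalues `log λᵢ` (junk value `0` for non-Hermitian input). -/
noncomputable def matLog {n : Type*} [Fintype n] [DecidableEq n] (A : Matrix n n ℂ) :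
    Matrix n n ℂ :=
  if h : A.IsHermitian then
    (h.eigenvectorUnitary : Matrix n n ℂ) *
      Matrix.diagonal (fun i => (Real.log (h.eigenvalues i) : ℂ)) *
      (h.eigenvectorUnitary : Matrix n n ℂ)ᴴ
  else 0

/-- Entrywise (Bochner) integral over `(0, ∞)` of a matrix-valued function. -/
noncomputable def matIntegral {n : Type*} [Fintype n] (f : ℝ → Matrix n n ℂ) :
    Matrix n n ℂ :=
  Matrix.of fun i j => ∫ u in Set.Ioi (0 : ℝ), f u i j

/-- Partial trace over the second factor `E`. -/
noncomputable def ptrace {B E : Type*} [Fintype E] (M : Matrix (B × E) (B × E) ℂ) :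
    Matrix B B ℂ :=
  Matrix.of fun b b' => ∑ e, M (b, e) (b', e)

/-- The quantum channel in Stinespring form associated with `K : ℂ^A → ℂ^B ⊗ ℂ^E`:
`Φ(ρ) = Tr_E (K ρ Kᴴ)`. -/
noncomputable def stine {A B E : Type*} [Fintype A] [Fintype B] [Fintype E]
    (K : Matrix (B × E) A ℂ) (ρ : Matrix A A ℂ) : Matrix B B ℂ :=
  ptrace (K * ρ * Kᴴ)

/-- The pure state `|ψ⟩⟨ψ|`. -/
noncomputable def pureState {A : Type*} (ψ : A → ℂ) : Matrix A A ℂ :=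
  Matrix.vecMulVec ψ (star ψ)

/-- A density matrix: positive semidefinite with trace 1. -/
def IsDensity {A : Type*} [Fintype A] [DecidableEq A] (ρ : Matrix A A ℂ) : Prop :=
  ρ.PosSemidef ∧ ρ.trace = 1

/-- A unit vector. -/
def unitVec {A : Type*} [Fintype A] (ψ : A → ℂ) : Prop :=
  ∑ i, Complex.normSq (ψ i) = 1

/-- The curve `ψ_t = √(1−t²) ψ + t χ` of unit vectors. -/
noncomputable def psit {A : Type*} (ψ χ : A → ℂ) (t : ℝ) : A → ℂ :=
  fun a => (Real.sqrt (1 - t ^ 2) : ℂ) * ψ a + (t : ℂ) * χ a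

/-- The Stinespring isometry of the product channel: the Kronecker product `K_A ⊗ K_C`
with its output reindexed as `(ℂ^B ⊗ ℂ^D) ⊗ (ℂ^E ⊗ ℂ^F)`. -/
noncomputable def prodK {dA dB dE dC dD dF : ℕ}
    (KA : Matrix (Fin dB × Fin dE) (Fin dA) ℂ)
    (KC : Matrix (Fin dD × Fin dF) (Fin dC) ℂ) :
    Matrix ((Fin dB × Fin dD) × (Fin dE × Fin dF)) (Fin dA × Fin dC) ℂ :=
  Matrix.reindex (Equiv.prodProdProdComm (Fin dB) (Fin dE) (Fin dD) (Fin dF))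
    (Equiv.refl _) (KA ⊗ₖ KC)

/-- `S(Φ(ρ))` has a nondegenerate local minimum at the pure state `|ψ⟩⟨ψ|`:
(i) it is a local minimum among density matrices, and (ii) for every unit vector `χ ⊥ ψ`
the second derivative of `t ↦ S(Φ(|ψ_t⟩⟨ψ_t|))` at `t = 0` is strictly positive. -/
def HasNondegLocalMinEnt {A B : Type*} [Fintype A] [Fintype B] [DecidableEq A]
    [DecidableEq B] (Φ : Matrix A A ℂ → Matrix B B ℂ) (ψ : A → ℂ) : Prop :=
  (∃ ε > 0, ∀ ρ : Matrix A A ℂ, IsDensity ρ → ‖ρ - pureState ψ‖ < ε →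
    entropy (Φ (pureState ψ)) ≤ entropy (Φ ρ)) ∧
  ∀ χ : A → ℂ, unitVec χ → (∑ i, (starRingEnd ℂ) (ψ i) * χ i = 0) →
    0 < iteratedDeriv 2 (fun t => entropy (Φ (pureState (psit ψ χ t)))) 0

/-- The relative entropy `H(ρ, ω) = Tr(ρ log ρ) − Tr(ρ log ω)`, with `Tr(ρ log ρ)`
computed via eigenvalues (convention `0·log 0 = 0`) and `log ω` the matrix logarithm. -/
noncomputable def relEntropy {n : Type*} [Fintype n] [DecidableEq n]
    (ρ ω : Matrix n n ℂ) : ℝ :=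
  -entropy ρ - (Matrix.trace (ρ * matLog ω)).re

/-- The Holevo capacity: the supremum over all finite ensembles `{(p_j, ψ_j)}` of
`χ(ℰ) = S(Φ(∑ p_j |ψ_j⟩⟨ψ_j|)) − ∑ p_j S(Φ(|ψ_j⟩⟨ψ_j|))`. -/
noncomputable def holevoCap {A B : Type*} [Fintype A] [Fintype B] [DecidableEq A]
    [DecidableEq B] (Φ : Matrix A A ℂ → Matrix B B ℂ) : ℝ :=
  sSup {x : ℝ | ∃ (n : ℕ) (p : Fin n → ℝ) (ψ : Fin n → A → ℂ),
    (∀ j, 0 ≤ p j) ∧ (∑ j, p j) = 1 ∧ (∀ j, unitVec (ψ j)) ∧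
    x = entropy (Φ (∑ j, (p j : ℂ) • pureState (ψ j))) -
      ∑ j, p j * entropy (Φ (pureState (ψ j)))}

/-- The supremum over unit vectors `Ψ` of `H(Φ(|Ψ⟩⟨Ψ|), σ)`. -/
noncomputable def supRelEnt {A B : Type*} [Fintype A] [Fintype B] [DecidableEq A]
    [DecidableEq B] (Φ : Matrix A A ℂ → Matrix B B ℂ) (σ : Matrix B B ℂ) : ℝ :=
  sSup {x : ℝ | ∃ Ψ : A → ℂ, unitVec Ψ ∧ x = relEntropy (Φ (pureState Ψ)) σ}


section Aux

variable {A B E : Type*}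

private lemma kron_conjT' {m n p q : Type*} [Fintype m] [Fintype n]
    (A : Matrix m p ℂ) (B : Matrix n q ℂ) :
    (A ⊗ₖ B)ᴴ = Aᴴ ⊗ₖ Bᴴ := by
  ext ⟨i,j⟩ ⟨k,l⟩
  simp [conjTranspose_apply, kroneckerMap_apply, mul_comm]

private lemma psd_kron' {m n : Type*} [Fintype m] [Fintype n] [DecidableEq m] [DecidableEq n]
    {A : Matrix m m ℂ} {B : Matrix n n ℂ} (hA : A.PosSemidef) (hB : B.PosSemidef) :
    (A ⊗ₖ B).PosSemidef := by
  exact hA.kronecker hB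

private lemma posdef_kron' {m n : Type*} [Fintype m] [Fintype n] [DecidableEq m] [DecidableEq n]
    {A : Matrix m m ℂ} {B : Matrix n n ℂ} (hA : A.PosDef) (hB : B.PosDef) :
    (A ⊗ₖ B).PosDef := by
  exact hA.kronecker hB

private lemma trace_ptrace' [Fintype B] [Fintype E] (M : Matrix (B × E) (B × E) ℂ) :
    (ptrace M).trace = M.trace := by
  simp [ptrace, Matrix.trace, Matrix.diag, Fintype.sum_prod_type]

private lemma star_ite' (p : Prop) [Decidable p] (c : ℂ) :
    star (if p then c else 0) = if p then star c else 0 := by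
  split <;> simp

private lemma ptrace_psd' [Fintype B] [Fintype E] [DecidableEq B] [DecidableEq E]
    {M : Matrix (B × E) (B × E) ℂ} (hM : M.PosSemidef) : (ptrace M).PosSemidef := by
  refine posSemidef_iff_dotProduct_mulVec.mpr ⟨?_, ?_⟩
  · ext b b'
    simp only [ptrace, conjTranspose_apply, of_apply, star_sum]
    exact Finset.sum_congr rfl fun e _ => hM.isHermitian.apply _ _
  · intro x
    have key : star x ⬝ᵥ (ptrace M) *ᵥ x
        = ∑ e, star (fun p : B × E => if p.2 = e then x p.1 else 0) ⬝ᵥ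
            M *ᵥ (fun p : B × E => if p.2 = e then x p.1 else 0) := by
      simp only [dotProduct, mulVec, ptrace, of_apply, Pi.star_apply, Fintype.sum_prod_type,
        star_ite', star_zero, mul_ite, ite_mul, zero_mul, mul_zero, Finset.sum_ite_eq',
        Finset.mem_univ, if_true, Finset.mul_sum, Finset.sum_mul]
      have hR : ∀ (e : E) (b : B),
          (∑ f : E, ∑ b' : B, if f = e then star (x b) * (M (b, f) (b', e) * x b') else 0)
            = ∑ b' : B, star (x b) * (M (b, e) (b', e) * x b') := by
        intro e b
        rw [Finset.sum_comm]
        simp [Finset.sum_ite_eq', Finset.mem_univ]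
      simp only [hR]
      refine Eq.trans (Finset.sum_congr rfl fun b _ => Finset.sum_comm) ?_
      exact Finset.sum_comm
    rw [key]
    exact Finset.sum_nonneg fun e _ => hM.dotProduct_mulVec_nonneg _

private lemma trace_stine' [Fintype A] [Fintype B] [Fintype E] [DecidableEq A]
    {K : Matrix (B × E) A ℂ} (hK : Kᴴ * K = 1) (ρ : Matrix A A ℂ) :
    (stine K ρ).trace = ρ.trace := by
  rw [stine, trace_ptrace', trace_mul_cycle, hK, one_mul]

private lemma stine_density' [Fintype A] [Fintype B] [Fintype E] [DecidableEq A]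
    [DecidableEq B] [DecidableEq E] {K : Matrix (B × E) A ℂ} (hK : Kᴴ * K = 1)
    {ρ : Matrix A A ℂ} (hρ : IsDensity ρ) : IsDensity (stine K ρ) :=
  ⟨ptrace_psd' (hρ.1.mul_mul_conjTranspose_same K), by rw [trace_stine' hK, hρ.2]⟩

private lemma pureState_density' [Fintype A] [DecidableEq A] {ψ : A → ℂ}
    (h : unitVec ψ) : IsDensity (pureState ψ) := by
  constructor
  · have : pureState ψ = replicateCol Unit ψ * (replicateCol Unit ψ)ᴴ := by
      rw [conjTranspose_replicateCol, ← vecMulVec_eq Unit]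
      rfl
    rw [this]
    exact posSemidef_self_mul_conjTranspose _
  · have : (pureState ψ).trace = ((∑ i, Complex.normSq (ψ i) : ℝ) : ℂ) := by
      simp [pureState, Matrix.trace, Matrix.diag, vecMulVec_apply, Complex.mul_conj]
    rw [this, h, Complex.ofReal_one]

private lemma trace_eq_sum_eigen' {n : Type*} [Fintype n] [DecidableEq n] {A : Matrix n n ℂ}
    (h : A.IsHermitian) : A.trace = ∑ i, (h.eigenvalues i : ℂ) := by
  conv_lhs => rw [h.spectral_theorem, Unitary.conjStarAlgAut_apply]
  rw [trace_mul_cycle]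
  rw [Unitary.coe_star_mul_self]
  simp [Matrix.trace_diagonal]

private lemma entropy_nonneg' {n : Type*} [Fintype n] [DecidableEq n] {A : Matrix n n ℂ}
    (hA : IsDensity A) : 0 ≤ entropy A := by
  have hsum : ∑ i, hA.1.1.eigenvalues i = 1 := by
    have h := (trace_eq_sum_eigen' hA.1.1).symm.trans hA.2
    have := congrArg Complex.re h
    simpa using this
  rw [entropy, dif_pos hA.1.1, neg_nonneg]
  refine Finset.sum_nonpos fun i _ => ?_
  have h0 : 0 ≤ hA.1.1.eigenvalues i := hA.1.eigenvalues_nonneg i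
  have h1 : hA.1.1.eigenvalues i ≤ 1 := by
    rw [← hsum]
    exact Finset.single_le_sum (fun j _ => hA.1.eigenvalues_nonneg j) (Finset.mem_univ i)
  exact mul_nonpos_of_nonneg_of_nonpos h0 (Real.log_nonpos h0 h1)

private lemma prodK_isometry' {d dE : ℕ} {K : Matrix (Fin d × Fin dE) (Fin d) ℂ}
    (hK : Kᴴ * K = 1) : (prodK K K)ᴴ * prodK K K = 1 := by
  rw [prodK, reindex_apply, Equiv.refl_symm, Equiv.coe_refl, conjTranspose_submatrix]
  rw [show ((K ⊗ₖ K)ᴴ.submatrix id _) = ((K ⊗ₖ K)ᴴ.submatrix (Equiv.refl _)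
    (Equiv.prodProdProdComm (Fin d) (Fin dE) (Fin d) (Fin dE)).symm) from rfl]
  rw [show ((K ⊗ₖ K).submatrix _ id) = ((K ⊗ₖ K).submatrix
    (Equiv.prodProdProdComm (Fin d) (Fin dE) (Fin d) (Fin dE)).symm (Equiv.refl _)) from rfl]
  rw [kron_conjT', submatrix_mul_equiv, ← mul_kronecker_mul, hK, one_kronecker_one]
  simp

private lemma ptrace_reindex_kron' {B D E F : Type*} [Fintype B] [Fintype D] [Fintype E]
    [Fintype F] (M : Matrix (B × E) (B × E) ℂ) (N : Matrix (D × F) (D × F) ℂ) :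
    ptrace (Matrix.reindex (Equiv.prodProdProdComm B E D F)
        (Equiv.prodProdProdComm B E D F) (M ⊗ₖ N)) = ptrace M ⊗ₖ ptrace N := by
  ext ⟨b, d⟩ ⟨b', d'⟩
  simp only [ptrace, reindex_apply, submatrix_apply, of_apply, kroneckerMap_apply,
    Equiv.prodProdProdComm_symm, Equiv.prodProdProdComm_apply, Fintype.sum_prod_type]
  rw [Finset.sum_mul_sum]

private lemma stine_prodK_kron' {d dE : ℕ} (K : Matrix (Fin d × Fin dE) (Fin d) ℂ)
    (ρ γ : Matrix (Fin d) (Fin d) ℂ) :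
    stine (prodK K K) (ρ ⊗ₖ γ) = stine K ρ ⊗ₖ stine K γ := by
  rw [stine, stine, stine, ← ptrace_reindex_kron']
  apply congrArg
  rw [prodK, reindex_apply, reindex_apply, Equiv.refl_symm, Equiv.coe_refl,
    conjTranspose_submatrix]
  set e := (Equiv.prodProdProdComm (Fin d) (Fin dE) (Fin d) (Fin dE))
  calc (K ⊗ₖ K).submatrix (⇑e.symm) id * (ρ ⊗ₖ γ) * (K ⊗ₖ K)ᴴ.submatrix id ⇑e.symm
      = ((K ⊗ₖ K).submatrix (⇑e.symm) (Equiv.refl _)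
            * ((ρ ⊗ₖ γ).submatrix (Equiv.refl _) (Equiv.refl _)))
          * (K ⊗ₖ K)ᴴ.submatrix (Equiv.refl _) ⇑e.symm := rfl
    _ = ((K ⊗ₖ K) * (ρ ⊗ₖ γ) * (K ⊗ₖ K)ᴴ).submatrix (⇑e.symm) (⇑e.symm) := by
        rw [submatrix_mul_equiv, submatrix_mul_equiv]
    _ = ((K * ρ * Kᴴ) ⊗ₖ (K * γ * Kᴴ)).submatrix (⇑e.symm) (⇑e.symm) := by
        rw [kron_conjT', ← mul_kronecker_mul, ← mul_kronecker_mul]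

private lemma norm_le_one_of_unitVec' [Fintype A] {ψ : A → ℂ} (h : unitVec ψ) (a : A) :
    ‖ψ a‖ ≤ 1 := by
  have h1 : Complex.normSq (ψ a) ≤ 1 := by
    rw [← h]
    exact Finset.single_le_sum (fun i _ => Complex.normSq_nonneg _) (Finset.mem_univ a)
  rw [← Complex.sq_norm] at h1
  nlinarith [norm_nonneg (ψ a)]

private lemma relEnt_bdd' [Fintype A] [Fintype B] [Fintype E] [DecidableEq A]
    [DecidableEq B] [DecidableEq E] (K : Matrix (B × E) A ℂ) (hK : Kᴴ * K = 1)
    (σ : Matrix B B ℂ) :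
    BddAbove {x : ℝ | ∃ Ψ : A → ℂ, unitVec Ψ ∧ x = relEntropy (stine K (pureState Ψ)) σ} := by
  set L := matLog σ with hL
  refine ⟨∑ b, ∑ b', (∑ e, ∑ a', ∑ a, ‖K (b,e) a‖ * ‖K (b',e) a'‖) * ‖L b' b‖, ?_⟩
  rintro x ⟨Ψ, hΨ, rfl⟩
  set ρ' := stine K (pureState Ψ) with hρ'
  have hdens : IsDensity ρ' := stine_density' hK (pureState_density' hΨ)
  have hent : 0 ≤ entropy ρ' := entropy_nonneg' hdens
  have htr : Matrix.trace (ρ' * L) = ∑ b, ∑ b', ρ' b b' * L b' b := by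
    simp [Matrix.trace, Matrix.diag, mul_apply]
  have hentry : ∀ b b', ‖ρ' b b'‖ ≤ ∑ e, ∑ a', ∑ a, ‖K (b,e) a‖ * ‖K (b',e) a'‖ := by
    intro b b'
    have hρval : ρ' b b'
        = ∑ e, ∑ a', (∑ a, K (b,e) a * (Ψ a * star (Ψ a'))) * star (K (b',e) a') := by
      simp [hρ', stine, ptrace, mul_apply, conjTranspose_apply, pureState, vecMulVec_apply,
        Finset.sum_mul]
    rw [hρval]
    refine le_trans (norm_sum_le _ _) (Finset.sum_le_sum fun e _ => ?_)
    refine le_trans (norm_sum_le _ _) (Finset.sum_le_sum fun a' _ => ?_)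
    rw [norm_mul, norm_star, ← Finset.sum_mul]
    have h1 : ∀ a, ‖K (b,e) a * (Ψ a * star (Ψ a'))‖ ≤ ‖K (b,e) a‖ := by
      intro a
      rw [norm_mul]
      have hle1 : ‖Ψ a * star (Ψ a')‖ ≤ 1 := by
        rw [norm_mul, norm_star]
        have := norm_le_one_of_unitVec' hΨ a
        have := norm_le_one_of_unitVec' hΨ a'
        have := norm_nonneg (Ψ a)
        have := norm_nonneg (Ψ a')
        nlinarith
      calc ‖K (b,e) a‖ * ‖Ψ a * star (Ψ a')‖ ≤ ‖K (b,e) a‖ * 1 :=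
            mul_le_mul_of_nonneg_left hle1 (norm_nonneg _)
        _ = ‖K (b,e) a‖ := mul_one _
    exact mul_le_mul_of_nonneg_right
      (le_trans (norm_sum_le _ _) (Finset.sum_le_sum fun a _ => h1 a)) (norm_nonneg _)
  have h2 : -(Matrix.trace (ρ' * L)).re ≤ ‖Matrix.trace (ρ' * L)‖ :=
    (neg_le_abs _).trans (Complex.abs_re_le_norm _)
  have h3 : ‖Matrix.trace (ρ' * L)‖ ≤ ∑ b, ∑ b', ‖ρ' b b'‖ * ‖L b' b‖ := by
    rw [htr]
    exact (norm_sum_le _ _).trans (Finset.sum_le_sum fun b _ =>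
      (norm_sum_le _ _).trans (Finset.sum_le_sum fun b' _ => le_of_eq (norm_mul _ _)))
  have h4 : (∑ b, ∑ b', ‖ρ' b b'‖ * ‖L b' b‖)
      ≤ ∑ b, ∑ b', (∑ e, ∑ a', ∑ a, ‖K (b,e) a‖ * ‖K (b',e) a'‖) * ‖L b' b‖ :=
    Finset.sum_le_sum fun b _ => Finset.sum_le_sum fun b' _ =>
      mul_le_mul_of_nonneg_right (hentry b b') (norm_nonneg _)
  have hre : relEntropy ρ' σ = -entropy ρ' - (Matrix.trace (ρ' * L)).re := rfl
  rw [hre]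
  linarith

private lemma not_unitVec_empty [Fintype A] [IsEmpty A] (ψ : A → ℂ) : ¬ unitVec ψ := by
  simp [unitVec]

private lemma holevoCap_empty {B' : Type*} [Fintype A] [Fintype B'] [DecidableEq A]
    [DecidableEq B'] [IsEmpty A] (Φ : Matrix A A ℂ → Matrix B' B' ℂ) : holevoCap Φ = 0 := by
  rw [holevoCap]
  convert Real.sSup_empty using 2
  ext x
  simp only [Set.mem_setOf_eq, Set.mem_empty_iff_false, iff_false]
  rintro ⟨n, p, ψ, hp, hsum, hunit, -⟩
  rcases Nat.eq_zero_or_pos n with hn | hn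
  · subst hn
    simp at hsum
  · exact not_unitVec_empty _ (hunit ⟨0, hn⟩)

private lemma supRelEnt_empty {B' : Type*} [Fintype A] [Fintype B'] [DecidableEq A]
    [DecidableEq B'] [IsEmpty A] (Φ : Matrix A A ℂ → Matrix B' B' ℂ) (σ : Matrix B' B' ℂ) :
    supRelEnt Φ σ = 0 := by
  rw [supRelEnt]
  convert Real.sSup_empty using 2
  ext x
  simp only [Set.mem_setOf_eq, Set.mem_empty_iff_false, iff_false]
  rintro ⟨Ψ, hΨ, -⟩
  exact not_unitVec_empty _ hΨ

end Aux

/-- Criterion for superadditivity of the Holevo capacity (Theorem `thm:super`):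
`C(Φ⊗Φ) > 2C(Φ)` iff some unit vector `Ψ ∈ ℂ^d ⊗ ℂ^d` satisfies
`H((Φ⊗Φ)(|Ψ⟩⟨Ψ|), (Φ⊗Φ)(ρ_Av ⊗ ρ_Av)) > 2C(Φ)`. -/
theorem holevo_superadditivity_criterion {d dE : ℕ}
    (K : Matrix (Fin d × Fin dE) (Fin d) ℂ) (hK : Kᴴ * K = 1)
    (ρAv : Matrix (Fin d) (Fin d) ℂ) (hρAv : IsDensity ρAv)
    (hρAvpos : (stine K ρAv).PosDef)
    (hi : ∀ γ : Matrix (Fin d × Fin d) (Fin d × Fin d) ℂ, IsDensity γ →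
      (stine (prodK K K) γ).PosDef →
      holevoCap (stine (prodK K K)) ≤ supRelEnt (stine (prodK K K)) (stine (prodK K K) γ))
    (hii : ∃ ΓAv : Matrix (Fin d × Fin d) (Fin d × Fin d) ℂ, IsDensity ΓAv ∧
      (stine (prodK K K) ΓAv).PosDef ∧
      holevoCap (stine (prodK K K)) =
        supRelEnt (stine (prodK K K)) (stine (prodK K K) ΓAv) ∧
      (stine (prodK K K) ΓAv ≠ stine (prodK K K) (ρAv ⊗ₖ ρAv) →
        2 * holevoCap (stine K) < holevoCap (stine (prodK K K)))) :
    2 * holevoCap (stine K) < holevoCap (stine (prodK K K)) ↔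
      ∃ Ψ : Fin d × Fin d → ℂ, unitVec Ψ ∧
        2 * holevoCap (stine K) <
          relEntropy (stine (prodK K K) (pureState Ψ))
            (stine (prodK K K) (ρAv ⊗ₖ ρAv)) := by
  have hK2 : (prodK K K)ᴴ * prodK K K = 1 := prodK_isometry' hK
  have hkrondens : IsDensity (ρAv ⊗ₖ ρAv) :=
    ⟨psd_kron' hρAv.1 hρAv.1, by rw [trace_kronecker, hρAv.2, one_mul]⟩
  have hσeq : stine (prodK K K) (ρAv ⊗ₖ ρAv) = stine K ρAv ⊗ₖ stine K ρAv :=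
    stine_prodK_kron' K ρAv ρAv
  have hσpos : (stine (prodK K K) (ρAv ⊗ₖ ρAv)).PosDef := by
    rw [hσeq]; exact posdef_kron' hρAvpos hρAvpos
  have hle : holevoCap (stine (prodK K K))
      ≤ supRelEnt (stine (prodK K K)) (stine (prodK K K) (ρAv ⊗ₖ ρAv)) :=
    hi _ hkrondens hσpos
  set S : Set ℝ := {x : ℝ | ∃ Ψ : Fin d × Fin d → ℂ, unitVec Ψ ∧
    x = relEntropy (stine (prodK K K) (pureState Ψ))
      (stine (prodK K K) (ρAv ⊗ₖ ρAv))} with hS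
  have hsup : supRelEnt (stine (prodK K K)) (stine (prodK K K) (ρAv ⊗ₖ ρAv)) = sSup S := rfl
  constructor
  · intro h
    rcases Nat.eq_zero_or_pos d with hd | hd
    · subst hd
      exfalso
      have h1 : holevoCap (stine (prodK K K)) = 0 := holevoCap_empty _
      have h2 : holevoCap (stine K) = 0 := holevoCap_empty _
      rw [h1, h2] at h
      norm_num at h
    · have hne : S.Nonempty := by
        refine ⟨_, Pi.single (⟨0, hd⟩, ⟨0, hd⟩) 1, ?_, rfl⟩
        rw [unitVec]
        simp [Pi.single_apply, apply_ite Complex.normSq, Finset.sum_ite_eq']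
      have hlt : 2 * holevoCap (stine K) < sSup S := by
        rw [← hsup]; exact lt_of_lt_of_le h hle
      obtain ⟨x, hxS, hx⟩ := exists_lt_of_lt_csSup hne hlt
      obtain ⟨Ψ, hΨ, rfl⟩ := hxS
      exact ⟨Ψ, hΨ, hx⟩
  · rintro ⟨Ψ, hΨ, hgt⟩
    obtain ⟨Γ, hΓd, hΓpos, hΓeq, hΓne⟩ := hii
    by_cases hcase : stine (prodK K K) Γ = stine (prodK K K) (ρAv ⊗ₖ ρAv)
    · have hmem : relEntropy (stine (prodK K K) (pureState Ψ))
          (stine (prodK K K) (ρAv ⊗ₖ ρAv)) ∈ S := ⟨Ψ, hΨ, rfl⟩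
      have hbdd : BddAbove S := relEnt_bdd' (prodK K K) hK2 _
      calc 2 * holevoCap (stine K)
          < relEntropy (stine (prodK K K) (pureState Ψ))
              (stine (prodK K K) (ρAv ⊗ₖ ρAv)) := hgt
        _ ≤ sSup S := le_csSup hbdd hmem
        _ = holevoCap (stine (prodK K K)) := by rw [hΓeq, hcase, hsup]
    · exact hΓne hcase
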